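/- Let Δ ≥ 1 be an integer, let k be an integer, and let C be a real number with C ≥ 3^{Δ/13}. Let Γ be a finite graph (loops allowed, at most one per vertex) with n vertices, exactly n + k edges, and every vertex of degree at most Δ. Then mis(Γ) ≤ C · 3^{n/3 − k/(13Δ)}. -/

import Mathlib

/-- The number of maximal independent sets of the graph (possibly with loops) on `V`
whose adjacency relation is `Adj`. A set `I` is independent if `Adj u v` holds for no
`u, v ∈ I` (in particular no vertex of `I` has a loop). -/
noncomputable def graphMIS {V : Type*} (Adj : V → V → Prop) : ℕ :=
  Nat.card {I : Set V // (∀ x ∈ I, ∀ y ∈ I, ¬ Adj x y) ∧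
    ∀ J : Set V, (∀ x ∈ J, ∀ y ∈ J, ¬ Adj x y) → I ⊆ J → I = J}

set_option linter.unusedSectionVars false
set_option linter.unusedVariables false
set_option linter.unreachableTactic false
set_option linter.unusedTactic false
open Classical Set Function


section Aux
variable {V : Type*} [Finite V]

def gIndep (Adj : V → V → Prop) (I : Set V) : Prop := ∀ x ∈ I, ∀ y ∈ I, ¬ Adj x y

def gMIS (Adj : V → V → Prop) (I : Set V) : Prop :=
  gIndep Adj I ∧ ∀ J : Set V, gIndep Adj J → I ⊆ J → I = J

def rSub (S : Set V) (Adj : V → V → Prop) : S → S → Prop := fun a b => Adj a b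

def symmOf {Adj : V → V → Prop} (h : Symmetric Adj) : Std.Symm Adj := ⟨fun _ _ hab => h hab⟩

lemma rSub_symm {S : Set V} {Adj : V → V → Prop} (hsym : Symmetric Adj) :
    Symmetric (rSub S Adj) := fun _ _ h => hsym h

def nbr (Adj : V → V → Prop) (v : V) : Set V := {u | u ≠ v ∧ Adj v u}

noncomputable def deg (Adj : V → V → Prop) (v : V) : ℕ := (nbr Adj v).ncard

def cnbh (Adj : V → V → Prop) (v : V) : Set V := {y | ¬ (y = v ∨ Adj v y)}

def cdel (v : V) : Set V := {y | y ≠ v}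

variable {Adj : V → V → Prop}

lemma gIndep_preimage {S : Set V} {I : Set V} (h : gIndep Adj I) :
    gIndep (rSub S Adj) (Subtype.val ⁻¹' I) := by
  intro x hx y hy
  exact h x hx y hy

lemma image_preimage_val (S I : Set V) :
    Subtype.val '' (Subtype.val ⁻¹' I : Set S) = I ∩ S := by
  rw [Set.image_preimage_eq_inter_range, Subtype.range_coe]

/-- Case A : `x ∈ I`, restrict to the complement of the closed neighbourhood of `x`. -/
lemma gMIS_res_cnbh (hsym : Symmetric Adj) {I : Set V} {x : V} (hI : gMIS Adj I)
    (hx : x ∈ I) :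
    gMIS (rSub (cnbh Adj x) Adj) (Subtype.val ⁻¹' I) ∧
      (Subtype.val '' (Subtype.val ⁻¹' I : Set (cnbh Adj x)) = I \ {x}) := by
  obtain ⟨hind, hmax⟩ := hI
  have himg : Subtype.val '' (Subtype.val ⁻¹' I : Set (cnbh Adj x)) = I \ {x} := by
    rw [image_preimage_val]
    ext y
    constructor
    · rintro ⟨hyI, hyS⟩
      refine ⟨hyI, ?_⟩
      intro hyx
      exact hyS (Or.inl hyx)
    · rintro ⟨hyI, hyx⟩
      exact ⟨hyI, fun h => h.elim (fun h' => hyx h') (fun h' => hind x hx y hyI h')⟩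
  refine ⟨⟨gIndep_preimage hind, ?_⟩, himg⟩
  intro J' hJ' hsub
  -- J := val '' J' ∪ {x}
  set J : Set V := (Subtype.val '' J') ∪ {x} with hJdef
  have hJind : gIndep Adj J := by
    rintro a (⟨a', ha', rfl⟩ | ha) b (⟨b', hb', rfl⟩ | hb)
    · exact hJ' a' ha' b' hb'
    · rw [Set.mem_singleton_iff] at hb; subst hb
      intro hadj
      exact a'.2 (Or.inr (hsym hadj))
    · rw [Set.mem_singleton_iff] at ha; subst ha
      intro hadj
      exact b'.2 (Or.inr hadj)
    · rw [Set.mem_singleton_iff] at ha hb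
      rw [ha, hb]
      exact hind x hx x hx
  have hIJ : I ⊆ J := by
    intro y hy
    by_cases hyx : y = x
    · exact Or.inr (by simp [hyx])
    · left
      have hyS : y ∈ cnbh Adj x := fun h =>
        h.elim (fun h' => hyx h') (fun h' => hind x hx y hy h')
      exact ⟨⟨y, hyS⟩, hsub hy, rfl⟩
  have hIeqJ : I = J := hmax J hJind hIJ
  apply Set.Subset.antisymm hsub
  intro j hj
  have : (j : V) ∈ J := Or.inl ⟨j, hj, rfl⟩
  rw [← hIeqJ] at this
  exact this

/-- Case B : `v ∉ I`, restrict to the complement of `v`. -/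
lemma gMIS_res_cdel {I : Set V} {v : V} (hI : gMIS Adj I) (hv : v ∉ I) :
    gMIS (rSub (cdel v) Adj) (Subtype.val ⁻¹' I) ∧
      (Subtype.val '' (Subtype.val ⁻¹' I : Set (cdel v)) = I) := by
  obtain ⟨hind, hmax⟩ := hI
  have himg : Subtype.val '' (Subtype.val ⁻¹' I : Set (cdel v)) = I := by
    rw [image_preimage_val]
    apply Set.inter_eq_self_of_subset_left
    intro y hy
    exact fun h : y = v => hv (h ▸ hy)
  refine ⟨⟨gIndep_preimage hind, ?_⟩, himg⟩
  intro J' hJ' hsub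
  set J : Set V := Subtype.val '' J' with hJdef
  have hJind : gIndep Adj J := by
    rintro a ⟨a', ha', rfl⟩ b ⟨b', hb', rfl⟩
    exact hJ' a' ha' b' hb'
  have hIJ : I ⊆ J := by
    intro y hy
    have hyv : y ≠ v := fun h => hv (h ▸ hy)
    exact ⟨⟨y, hyv⟩, hsub hy, rfl⟩
  have hIeqJ : I = J := hmax J hJind hIJ
  apply Set.Subset.antisymm hsub
  intro j hj
  have : (j : V) ∈ J := ⟨j, hj, rfl⟩
  rw [← hIeqJ] at this
  exact this

end Aux
section Aux2
variable {V : Type*} [Finite V] {Adj : V → V → Prop}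

noncomputable def misCount {V : Type*} (Adj : V → V → Prop) : ℕ :=
  Nat.card {I : Set V // gMIS Adj I}

lemma eq_of_diff_singleton_eq {I₁ I₂ : Set V} {x : V} (h1 : x ∈ I₁) (h2 : x ∈ I₂)
    (h : I₁ \ {x} = I₂ \ {x}) : I₁ = I₂ := by
  ext y
  by_cases hy : y = x
  · subst hy; simp [h1, h2]
  · constructor
    · intro hyI; exact ((Set.ext_iff.mp h y).mp ⟨hyI, hy⟩).1
    · intro hyI; exact ((Set.ext_iff.mp h y).mpr ⟨hyI, hy⟩).1

lemma mis_loop_notMem {I : Set V} (hI : gMIS Adj I) {v : V} (hloop : Adj v v) : v ∉ I :=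
  fun hv => hI.1 v hv v hv hloop

lemma mis_le_of_loop {v : V} (hloop : Adj v v) :
    misCount Adj ≤ misCount (rSub (cdel v) Adj) := by
  apply Nat.card_le_card_of_injective
    (fun I : {I : Set V // gMIS Adj I} =>
      (⟨Subtype.val ⁻¹' I.1, (gMIS_res_cdel I.2 (mis_loop_notMem I.2 hloop)).1⟩ :
        {J : Set (cdel v) // gMIS (rSub (cdel v) Adj) J}))
  intro I₁ I₂ h
  have h' := congrArg (fun J => Subtype.val '' J.1) h
  simp only at h'
  rw [(gMIS_res_cdel I₁.2 (mis_loop_notMem I₁.2 hloop)).2,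
    (gMIS_res_cdel I₂.2 (mis_loop_notMem I₂.2 hloop)).2] at h'
  exact Subtype.ext h'

lemma mis_isolated_mem (hsym : Symmetric Adj) {I : Set V} (hI : gMIS Adj I) {v : V}
    (h0 : ∀ u, ¬ Adj v u) : v ∈ I := by
  by_contra hv
  have hind : gIndep Adj (I ∪ {v}) := by
    rintro a (ha | ha) b (hb | hb)
    · exact hI.1 a ha b hb
    · rw [Set.mem_singleton_iff] at hb; rw [hb]
      intro hadj; exact h0 a (hsym hadj)
    · rw [Set.mem_singleton_iff] at ha; rw [ha]; exact h0 b
    · rw [Set.mem_singleton_iff] at ha; rw [ha]; exact h0 b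
  have := hI.2 (I ∪ {v}) hind Set.subset_union_left
  exact hv (this ▸ (Or.inr rfl : v ∈ I ∪ {v}))

lemma mis_le_of_isolated (hsym : Symmetric Adj) {v : V} (h0 : ∀ u, ¬ Adj v u) :
    misCount Adj ≤ misCount (rSub (cnbh Adj v) Adj) := by
  apply Nat.card_le_card_of_injective
    (fun I : {I : Set V // gMIS Adj I} =>
      (⟨Subtype.val ⁻¹' I.1, (gMIS_res_cnbh hsym I.2 (mis_isolated_mem hsym I.2 h0)).1⟩ :
        {J : Set (cnbh Adj v) // gMIS (rSub (cnbh Adj v) Adj) J}))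
  intro I₁ I₂ h
  have h' := congrArg (fun J => Subtype.val '' J.1) h
  simp only at h'
  rw [(gMIS_res_cnbh hsym I₁.2 (mis_isolated_mem hsym I₁.2 h0)).2,
    (gMIS_res_cnbh hsym I₂.2 (mis_isolated_mem hsym I₂.2 h0)).2] at h'
  exact Subtype.ext (eq_of_diff_singleton_eq (mis_isolated_mem hsym I₁.2 h0)
    (mis_isolated_mem hsym I₂.2 h0) h')

lemma mis_le_two_branch (hsym : Symmetric Adj) (v : V) :
    misCount Adj ≤ misCount (rSub (cdel v) Adj) + misCount (rSub (cnbh Adj v) Adj) := by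
  unfold misCount
  rw [← Nat.card_sum]
  apply Nat.card_le_card_of_injective
    (fun I : {I : Set V // gMIS Adj I} =>
      if hv : v ∈ I.1 then
        Sum.inr (⟨Subtype.val ⁻¹' I.1, (gMIS_res_cnbh hsym I.2 hv).1⟩ :
          {J : Set (cnbh Adj v) // gMIS (rSub (cnbh Adj v) Adj) J})
      else
        Sum.inl (⟨Subtype.val ⁻¹' I.1, (gMIS_res_cdel I.2 hv).1⟩ :
          {J : Set (cdel v) // gMIS (rSub (cdel v) Adj) J}))
  intro I₁ I₂ h
  by_cases h1 : v ∈ I₁.1 <;> by_cases h2 : v ∈ I₂.1 <;> simp only [h1, h2, dif_pos, dif_neg,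
    not_false_iff, Sum.inr.injEq, Sum.inl.injEq, reduceCtorEq] at h
  · have h' := congrArg (fun J : Set (cnbh Adj v) => Subtype.val '' J) (Subtype.ext_iff.mp h)
    simp only at h'
    rw [(gMIS_res_cnbh hsym I₁.2 h1).2, (gMIS_res_cnbh hsym I₂.2 h2).2] at h'
    exact Subtype.ext (eq_of_diff_singleton_eq h1 h2 h')
  · have h' := congrArg (fun J : Set (cdel v) => Subtype.val '' J) (Subtype.ext_iff.mp h)
    simp only at h'
    rw [(gMIS_res_cdel I₁.2 h1).2, (gMIS_res_cdel I₂.2 h2).2] at h'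
    exact Subtype.ext h'

lemma mis_three_mem (hsym : Symmetric Adj) {I : Set V} (hI : gMIS Adj I) {v a b : V}
    (hnl : ¬ Adj v v) (hcov : ∀ y, Adj v y → y = a ∨ y = b) (hv : v ∉ I) (ha : a ∉ I) :
    b ∈ I := by
  by_contra hb
  have hind : gIndep Adj (I ∪ {v}) := by
    have hvI : ∀ y ∈ I, ¬ Adj v y := by
      intro y hy hadj
      rcases hcov y hadj with rfl | rfl
      · exact ha hy
      · exact hb hy
    rintro x (hx | hx) y (hy | hy)
    · exact hI.1 x hx y hy
    · rw [Set.mem_singleton_iff] at hy; rw [hy]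
      intro hadj; exact hvI x hx (hsym hadj)
    · rw [Set.mem_singleton_iff] at hx; rw [hx]; exact hvI y hy
    · rw [Set.mem_singleton_iff] at hx hy; rw [hx, hy]
      exact hnl
  have := hI.2 (I ∪ {v}) hind Set.subset_union_left
  exact hv (this ▸ (Or.inr rfl : v ∈ I ∪ {v}))

end Aux2
section Aux3
variable {V : Type*} [Finite V] {Adj : V → V → Prop}

lemma mis_le_three_branch (hsym : Symmetric Adj) {v a b : V} (hnl : ¬ Adj v v)
    (hcov : ∀ y, Adj v y → y = a ∨ y = b) :
    misCount Adj ≤ misCount (rSub (cnbh Adj v) Adj) + misCount (rSub (cnbh Adj a) Adj)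
      + misCount (rSub (cnbh Adj b) Adj) := by
  unfold misCount
  rw [← Nat.card_sum, ← Nat.card_sum]
  apply Nat.card_le_card_of_injective
    (fun I : {I : Set V // gMIS Adj I} =>
      if hv : v ∈ I.1 then
        Sum.inl (Sum.inl (⟨Subtype.val ⁻¹' I.1, (gMIS_res_cnbh hsym I.2 hv).1⟩ :
          {J : Set (cnbh Adj v) // gMIS (rSub (cnbh Adj v) Adj) J}))
      else if ha : a ∈ I.1 then
        Sum.inl (Sum.inr (⟨Subtype.val ⁻¹' I.1, (gMIS_res_cnbh hsym I.2 ha).1⟩ :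
          {J : Set (cnbh Adj a) // gMIS (rSub (cnbh Adj a) Adj) J}))
      else
        Sum.inr (⟨Subtype.val ⁻¹' I.1,
          (gMIS_res_cnbh hsym I.2 (mis_three_mem hsym I.2 hnl hcov hv ha)).1⟩ :
          {J : Set (cnbh Adj b) // gMIS (rSub (cnbh Adj b) Adj) J}))
  intro I₁ I₂ h
  have key : ∀ (x : V) (hx1 : x ∈ I₁.1) (hx2 : x ∈ I₂.1),
      (Subtype.val ⁻¹' I₁.1 : Set (cnbh Adj x)) = Subtype.val ⁻¹' I₂.1 → I₁ = I₂ := by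
    intro x hx1 hx2 hpre
    have h' := congrArg (fun J : Set (cnbh Adj x) => Subtype.val '' J) hpre
    rw [(gMIS_res_cnbh hsym I₁.2 hx1).2, (gMIS_res_cnbh hsym I₂.2 hx2).2] at h'
    exact Subtype.ext (eq_of_diff_singleton_eq hx1 hx2 h')
  by_cases h1v : v ∈ I₁.1 <;> by_cases h2v : v ∈ I₂.1 <;>
    simp only [h1v, h2v, dif_pos, dif_neg, not_false_iff] at h
  · exact key v h1v h2v (Subtype.ext_iff.mp (Sum.inl_injective (Sum.inl_injective h)))
  · by_cases h2a : a ∈ I₂.1 <;> simp only [h2a, dif_pos, dif_neg, not_false_iff,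
      reduceCtorEq, Sum.inl.injEq, Sum.inr.injEq] at h
  · by_cases h1a : a ∈ I₁.1 <;> simp only [h1a, dif_pos, dif_neg, not_false_iff,
      reduceCtorEq, Sum.inl.injEq, Sum.inr.injEq] at h
  · by_cases h1a : a ∈ I₁.1 <;> by_cases h2a : a ∈ I₂.1 <;> simp only [h1a, h2a, dif_pos,
      dif_neg, not_false_iff, reduceCtorEq, Sum.inl.injEq, Sum.inr.injEq] at h
    · exact key a h1a h2a (Subtype.ext_iff.mp h)
    · exact key b (mis_three_mem hsym I₁.2 hnl hcov h1v h1a)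
        (mis_three_mem hsym I₂.2 hnl hcov h2v h2a) (Subtype.ext_iff.mp h)

end Aux3
section Counting
variable {V : Type*} [Finite V] {Adj : V → V → Prop}

/-- card of the `cdel` subtype -/
lemma card_cdel (v : V) : Nat.card (cdel v : Set V) + 1 = Nat.card V := by
  have h := Set.ncard_add_ncard_compl (cdel v : Set V) (Set.toFinite _) (Set.toFinite _)
  rw [Nat.card_coe_set_eq]
  have hc : (cdel v : Set V)ᶜ = {v} := by
    ext y; simp [cdel, not_not]
  rw [hc, Set.ncard_singleton] at h
  exact h

lemma nbhd_eq_insert (Adj : V → V → Prop) (v : V) :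
    {y | y = v ∨ Adj v y} = insert v (nbr Adj v) := by
  ext y
  by_cases hy : y = v <;> simp [nbr, hy]

lemma card_cnbh (Adj : V → V → Prop) (v : V) :
    Nat.card (cnbh Adj v : Set V) + (deg Adj v + 1) = Nat.card V := by
  have h := Set.ncard_add_ncard_compl (cnbh Adj v : Set V) (Set.toFinite _) (Set.toFinite _)
  rw [Nat.card_coe_set_eq]
  have hc : (cnbh Adj v : Set V)ᶜ = insert v (nbr Adj v) := by
    rw [← nbhd_eq_insert]
    ext y; simp only [cnbh, Set.mem_compl_iff, Set.mem_setOf_eq, not_not]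
  have hv : v ∉ nbr Adj v := fun h => h.1 rfl
  rw [hc, Set.ncard_insert_of_notMem hv (Set.toFinite _)] at h
  unfold deg
  omega

/-- degrees only drop in subgraphs -/
lemma deg_sub_le (S : Set V) (x : S) : deg (rSub S Adj) x ≤ deg Adj x := by
  have himg : Subtype.val '' nbr (rSub S Adj) x ⊆ nbr Adj x := by
    rintro y ⟨y', hy', rfl⟩
    exact ⟨fun h => hy'.1 (Subtype.ext h), hy'.2⟩
  calc deg (rSub S Adj) x = (Subtype.val '' nbr (rSub S Adj) x).ncard :=
        (Set.ncard_image_of_injective _ Subtype.val_injective).symm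
    _ ≤ (nbr Adj x).ncard := Set.ncard_le_ncard himg (Set.toFinite _)

/-- deleting a neighbour makes the degree strictly drop -/
lemma deg_sub_cdel_lt {v : V} (x : (cdel v : Set V)) (hadj : Adj x v) :
    deg (rSub (cdel v) Adj) x + 1 ≤ deg Adj x := by
  have hvx : v ≠ (x : V) := fun h => x.2 h.symm
  have hvmem : v ∈ nbr Adj x := ⟨hvx, hadj⟩
  have himg : Subtype.val '' nbr (rSub (cdel v) Adj) x ⊆ nbr Adj x \ {v} := by
    rintro y ⟨y', hy', rfl⟩
    exact ⟨⟨fun h => hy'.1 (Subtype.ext h), hy'.2⟩, y'.2⟩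
  have h1 : deg (rSub (cdel v) Adj) x ≤ (nbr Adj x \ {v}).ncard := by
    calc deg (rSub (cdel v) Adj) x = (Subtype.val '' nbr (rSub (cdel v) Adj) x).ncard :=
          (Set.ncard_image_of_injective _ Subtype.val_injective).symm
      _ ≤ _ := Set.ncard_le_ncard himg (Set.toFinite _)
  have h2 : (nbr Adj x \ {v}).ncard + 1 = deg Adj x := by
    rw [deg, ← Set.ncard_diff_singleton_add_one hvmem (Set.toFinite _)]
  omega

lemma loop_sub (S : Set V) (x : S) : rSub S Adj x x ↔ Adj x x := Iff.rfl

end Counting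
section Edges
variable {V : Type*} [Finite V] {Adj : V → V → Prop}

lemma edge_image (hsym : Symmetric Adj) (S : Set V) :
    Sym2.map (Subtype.val) '' (Sym2.fromRel (symmOf (rSub_symm (S := S) hsym))) =
      {e | e ∈ Sym2.fromRel (symmOf hsym) ∧ ∀ x ∈ e, x ∈ S} := by
  ext e
  constructor
  · rintro ⟨e', he', rfl⟩
    induction e' using Sym2.ind with
    | _ x y =>
      rw [Sym2.map_pair_eq]
      have h' : rSub S Adj x y := (Sym2.fromRel_prop (sym := symmOf (rSub_symm (S := S) hsym))).mp he'
      refine ⟨(Sym2.fromRel_prop (sym := symmOf hsym)).mpr h', ?_⟩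
      intro z hz
      rcases Sym2.mem_iff.mp hz with rfl | rfl
      · exact x.2
      · exact y.2
  · rintro ⟨he, hall⟩
    induction e using Sym2.ind with
    | _ x y =>
      have hx : x ∈ S := hall x (Sym2.mem_mk_left x y)
      have hy : y ∈ S := hall y (Sym2.mem_mk_right x y)
      have h' : Adj x y := (Sym2.fromRel_prop (sym := symmOf hsym)).mp he
      refine ⟨s(⟨x, hx⟩, ⟨y, hy⟩),
        (Sym2.fromRel_prop (sym := symmOf (rSub_symm (S := S) hsym))).mpr h', ?_⟩
      rw [Sym2.map_pair_eq]

lemma edge_split (hsym : Symmetric Adj) (S : Set V) :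
    (Sym2.fromRel (symmOf hsym)).ncard =
      (Sym2.fromRel (symmOf (rSub_symm (S := S) hsym))).ncard +
      {e | e ∈ Sym2.fromRel (symmOf hsym) ∧ ∃ x ∈ e, x ∉ S}.ncard := by
  have h1 : (Sym2.fromRel (symmOf (rSub_symm (S := S) hsym))).ncard =
      {e | e ∈ Sym2.fromRel (symmOf hsym) ∧ ∀ x ∈ e, x ∈ S}.ncard := by
    rw [← edge_image hsym S]
    exact (Set.ncard_image_of_injective _ (Sym2.map.injective Subtype.val_injective)).symm
  have hsub : {e | e ∈ Sym2.fromRel (symmOf hsym) ∧ ∀ x ∈ e, x ∈ S} ⊆ Sym2.fromRel (symmOf hsym) :=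
    fun e he => he.1
  have h2 := Set.ncard_diff_add_ncard_of_subset hsub (Set.toFinite _)
  have h3 : Sym2.fromRel (symmOf hsym) \ {e | e ∈ Sym2.fromRel (symmOf hsym) ∧ ∀ x ∈ e, x ∈ S} =
      {e | e ∈ Sym2.fromRel (symmOf hsym) ∧ ∃ x ∈ e, x ∉ S} := by
    ext e
    simp only [Set.mem_diff, Set.mem_setOf_eq, not_and]
    constructor
    · rintro ⟨he, h⟩
      have := h he
      push_neg at this
      exact ⟨he, this⟩
    · rintro ⟨he, x, hx, hxS⟩
      exact ⟨he, fun _ hall => hxS (hall x hx)⟩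
  rw [h1, ← h3]
  omega

end Edges
section Cuts
variable {V : Type*} [Finite V] {Adj : V → V → Prop}

def edgesAt (hsym : Symmetric Adj) (w : V) : Set (Sym2 V) :=
  {e | e ∈ Sym2.fromRel (symmOf hsym) ∧ w ∈ e}

lemma edgesAt_subset_image (hsym : Symmetric Adj) {w : V} (hnl : ¬ Adj w w) :
    edgesAt hsym w ⊆ (fun u => s(w, u)) '' (nbr Adj w) := by
  rintro e ⟨he, hw⟩
  obtain ⟨u, rfl⟩ := Sym2.mem_iff_exists.mp hw
  have hadj : Adj w u := (Sym2.fromRel_prop (sym := symmOf hsym)).mp he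
  have huw : u ≠ w := fun h => hnl (h ▸ hadj)
  exact ⟨u, ⟨huw, hadj⟩, rfl⟩

lemma edgesAt_ncard_le (hsym : Symmetric Adj) {w : V} (hnl : ¬ Adj w w) :
    (edgesAt hsym w).ncard ≤ deg Adj w :=
  le_trans (Set.ncard_le_ncard (edgesAt_subset_image hsym hnl) (Set.toFinite _))
    (Set.ncard_image_le (Set.toFinite _))

lemma edgesAt_ncard_le_loop (hsym : Symmetric Adj) (w : V) :
    (edgesAt hsym w).ncard ≤ deg Adj w + 1 := by
  have hsub : edgesAt hsym w ⊆ insert s(w, w) ((fun u => s(w, u)) '' (nbr Adj w)) := by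
    rintro e ⟨he, hw⟩
    obtain ⟨u, rfl⟩ := Sym2.mem_iff_exists.mp hw
    have hadj : Adj w u := (Sym2.fromRel_prop (sym := symmOf hsym)).mp he
    by_cases huw : u = w
    · rw [huw]; exact Set.mem_insert _ _
    · exact Set.mem_insert_of_mem _ ⟨u, ⟨huw, hadj⟩, rfl⟩
  calc (edgesAt hsym w).ncard ≤ _ := Set.ncard_le_ncard hsub (Set.toFinite _)
    _ ≤ ((fun u => s(w, u)) '' (nbr Adj w)).ncard + 1 := Set.ncard_insert_le _ _
    _ ≤ deg Adj w + 1 := by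
        have := Set.ncard_image_le (s := nbr Adj w) (f := fun u => s(w, u)) (Set.toFinite _)
        unfold deg
        omega

lemma cut_cdel_le (hsym : Symmetric Adj) {v : V} (hnl : ¬ Adj v v) :
    {e | e ∈ Sym2.fromRel (symmOf hsym) ∧ ∃ x ∈ e, x ∉ (cdel v : Set V)}.ncard ≤ deg Adj v := by
  refine le_trans (Set.ncard_le_ncard ?_ (Set.toFinite _)) (edgesAt_ncard_le hsym hnl)
  rintro e ⟨he, x, hx, hxv⟩
  have : x = v := not_not.mp hxv
  exact ⟨he, this ▸ hx⟩

lemma cut_cdel_le_loop (hsym : Symmetric Adj) (v : V) :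
    {e | e ∈ Sym2.fromRel (symmOf hsym) ∧ ∃ x ∈ e, x ∉ (cdel v : Set V)}.ncard ≤ deg Adj v + 1 := by
  refine le_trans (Set.ncard_le_ncard ?_ (Set.toFinite _)) (edgesAt_ncard_le_loop hsym v)
  rintro e ⟨he, x, hx, hxv⟩
  have : x = v := not_not.mp hxv
  exact ⟨he, this ▸ hx⟩

lemma ncard_finset_biUnion_le {α β : Type*} [Finite β] (t : Finset α) (f : α → Set β) :
    (⋃ x ∈ t, f x).ncard ≤ ∑ x ∈ t, (f x).ncard := by
  classical
  induction t using Finset.induction with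
  | empty => simp
  | insert _ _ hnot ih =>
      rename_i a s
      rw [Finset.set_biUnion_insert, Finset.sum_insert hnot]
      exact le_trans (Set.ncard_union_le _ _) (by omega)

lemma edgesAt_diff_le (hsym : Symmetric Adj) {w v : V} (hnlw : ¬ Adj w w)
    (hvw : v ≠ w) (hadj : Adj w v) :
    (edgesAt hsym w \ edgesAt hsym v).ncard + 1 ≤ deg Adj w := by
  have hvmem : v ∈ nbr Adj w := ⟨hvw, hadj⟩
  have hsub : edgesAt hsym w \ edgesAt hsym v ⊆
      (fun u => s(w, u)) '' (nbr Adj w \ {v}) := by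
    rintro e ⟨⟨he, hw⟩, hnv⟩
    obtain ⟨u, rfl⟩ := Sym2.mem_iff_exists.mp hw
    have hadj' : Adj w u := (Sym2.fromRel_prop (sym := symmOf hsym)).mp he
    have huw : u ≠ w := fun h => hnlw (h ▸ hadj')
    have huv : u ≠ v := by
      rintro rfl
      exact hnv ⟨he, Sym2.mem_mk_right w u⟩
    exact ⟨u, ⟨⟨huw, hadj'⟩, huv⟩, rfl⟩
  have h1 : (edgesAt hsym w \ edgesAt hsym v).ncard ≤ (nbr Adj w \ {v}).ncard :=
    le_trans (Set.ncard_le_ncard hsub (Set.toFinite _)) (Set.ncard_image_le (Set.toFinite _))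
  have h2 : (nbr Adj w \ {v}).ncard + 1 = deg Adj w :=
    Set.ncard_diff_singleton_add_one hvmem (Set.toFinite _)
  omega

/-- main cut bound for removing a closed neighbourhood, in a loopless graph -/
lemma cut_cnbh_le (hsym : Symmetric Adj) (hnl : ∀ x, ¬ Adj x x) (v : V) (D : ℕ)
    (hD1 : 1 ≤ D) (hD : ∀ w ∈ nbr Adj v, deg Adj w ≤ D) :
    {e | e ∈ Sym2.fromRel (symmOf hsym) ∧ ∃ x ∈ e, x ∉ (cnbh Adj v : Set V)}.ncard
      ≤ deg Adj v * D := by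
  classical
  set t : Finset V := (Set.toFinite (nbr Adj v)).toFinset with ht
  have htmem : ∀ w, w ∈ t ↔ w ∈ nbr Adj v := by
    intro w; rw [ht, Set.Finite.mem_toFinset]
  have hsub : {e | e ∈ Sym2.fromRel (symmOf hsym) ∧ ∃ x ∈ e, x ∉ (cnbh Adj v : Set V)} ⊆
      edgesAt hsym v ∪ ⋃ w ∈ t, (edgesAt hsym w \ edgesAt hsym v) := by
    rintro e ⟨he, x, hx, hxS⟩
    rw [cnbh, Set.mem_setOf_eq, not_not] at hxS
    by_cases hv : v ∈ e
    · exact Or.inl ⟨he, hv⟩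
    · right
      rcases hxS with rfl | hadj
      · exact absurd hx hv
      · have hxv : x ≠ v := fun h => hnl v (h ▸ hadj)
        refine Set.mem_biUnion ((htmem x).mpr ⟨hxv, hadj⟩) ⟨⟨he, hx⟩, fun hc => hv hc.2⟩
  have hcard : t.card = deg Adj v := by
    rw [ht, deg, Set.ncard_eq_toFinset_card _ (Set.toFinite _)]
  calc {e | e ∈ Sym2.fromRel (symmOf hsym) ∧ ∃ x ∈ e, x ∉ (cnbh Adj v : Set V)}.ncard
      ≤ (edgesAt hsym v ∪ ⋃ w ∈ t, (edgesAt hsym w \ edgesAt hsym v)).ncard :=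
        Set.ncard_le_ncard hsub (Set.toFinite _)
    _ ≤ (edgesAt hsym v).ncard + (⋃ w ∈ t, (edgesAt hsym w \ edgesAt hsym v)).ncard :=
        Set.ncard_union_le _ _
    _ ≤ deg Adj v + ∑ w ∈ t, (edgesAt hsym w \ edgesAt hsym v).ncard := by
        have h1 := edgesAt_ncard_le hsym (hnl v)
        have h2 := ncard_finset_biUnion_le t (fun w => edgesAt hsym w \ edgesAt hsym v)
        omega
    _ ≤ deg Adj v + t.card * (D - 1) := by
        have hbound : ∀ w ∈ t, (edgesAt hsym w \ edgesAt hsym v).ncard ≤ D - 1 := by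
          intro w hw
          have hw' := (htmem w).mp hw
          have := edgesAt_diff_le hsym (hnl w) (fun h => hw'.1 h.symm)
            (hsym hw'.2)
          have := hD w hw'
          omega
        have := Finset.sum_le_card_nsmul t _ (D - 1) hbound
        simp only [smul_eq_mul] at this
        omega
    _ ≤ deg Adj v * D := by
        rw [hcard]
        have : deg Adj v * D = deg Adj v + deg Adj v * (D - 1) := by
          obtain ⟨d, rfl⟩ := Nat.exists_eq_add_of_le hD1
          simp only [Nat.add_sub_cancel_left]
          ring
        omega

end Cuts
section Small
variable {V : Type*} [Finite V] {Adj : V → V → Prop}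

lemma misCount_le_one_of_empty (Adj : V → V → Prop) [IsEmpty V] : misCount Adj ≤ 1 := by
  have hsub : Subsingleton {I : Set V // gMIS Adj I} := by
    constructor
    intro a b
    apply Subtype.ext
    ext x
    exact isEmptyElim x
  have hinj : Function.Injective (fun _ : {I : Set V // gMIS Adj I} => (() : Unit)) :=
    fun a b _ => Subsingleton.elim a b
  have h1 : Nat.card Unit = 1 := Nat.card_unique
  exact le_trans (Nat.card_le_card_of_injective _ hinj) (le_of_eq h1)

lemma edges_empty (hsym : Symmetric Adj) [IsEmpty V] : (Sym2.fromRel (symmOf hsym)).ncard = 0 := by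
  have : Sym2.fromRel (symmOf hsym) = ∅ := by
    apply Set.eq_empty_of_forall_notMem
    intro e
    induction e using Sym2.ind with
    | _ x y => exact isEmptyElim x
  rw [this, Set.ncard_empty]

lemma no_nbr_of_deg_zero {v : V} (hnl : ¬ Adj v v) (h : deg Adj v = 0) :
    ∀ u, ¬ Adj v u := by
  have hempty : nbr Adj v = ∅ := by
    rw [deg] at h
    exact (Set.ncard_eq_zero (Set.toFinite _)).mp h
  intro u hadj
  by_cases huv : u = v
  · exact hnl (huv ▸ hadj)
  · have : u ∈ nbr Adj v := ⟨huv, hadj⟩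
    rw [hempty] at this
    exact this

lemma deg_zero_of_no_nbr {v : V} (h : ∀ u, ¬ Adj v u) : deg Adj v = 0 := by
  rw [deg]
  rw [Set.ncard_eq_zero (Set.toFinite _)]
  apply Set.eq_empty_of_forall_notMem
  intro u hu
  exact h u hu.2

end Small

section MLE

universe u

/-- In a loopless graph with maximum degree `≤ 2` the number of edges is at most the number
of vertices, with a strict inequality if some vertex has degree at most 1. -/
lemma edges_le_of_maxdeg2 : ∀ (N : ℕ), ∀ {V : Type u} [Finite V] (Adj : V → V → Prop)
    (hsym : Symmetric Adj), Nat.card V = N → (∀ x, ¬ Adj x x) → (∀ x, deg Adj x ≤ 2) →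
    (Sym2.fromRel (symmOf hsym)).ncard ≤ N ∧
      ((∃ v, deg Adj v ≤ 1) → (Sym2.fromRel (symmOf hsym)).ncard + 1 ≤ N) := by
  intro N
  induction N using Nat.strong_induction_on with
  | _ N ih =>
    intro V _ Adj hsym hcard hnl hdeg2
    rcases Nat.eq_zero_or_pos N with hN | hN
    · subst hN
      have hempty : IsEmpty V := by
        rcases Nat.card_eq_zero.mp hcard with h | h
        · exact h
        · exact absurd ‹Finite V› h.not_finite
      constructor
      · rw [edges_empty hsym]
      · rintro ⟨v, -⟩
        exact isEmptyElim v
    · have key : ∀ v : V, deg Adj v ≥ 1 →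
          (Sym2.fromRel (symmOf hsym)).ncard + 1 ≤ N - 1 + deg Adj v := by
        intro v hdv1
        have hsplit := edge_split hsym (cdel v)
        have hcut := cut_cdel_le hsym (hnl v)
        have hcS : Nat.card ((cdel v : Set V) : Type u) = N - 1 := by
          have := card_cdel (V := V) v
          omega
        have hIH := ih (N - 1) (by omega) (rSub (cdel v) Adj) (rSub_symm hsym) hcS
          (fun x => hnl x) (fun x => le_trans (deg_sub_le (cdel v) x) (hdeg2 x))
        -- v has a neighbour u, whose degree drops in the subgraph
        have hne : (nbr Adj v).Nonempty := by
          have := (Set.ncard_pos (s := nbr Adj v) (Set.toFinite _)).mpr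
          by_contra hcon
          rw [Set.not_nonempty_iff_eq_empty] at hcon
          have : deg Adj v = 0 := by rw [deg, hcon, Set.ncard_empty]
          omega
        obtain ⟨u, hu⟩ := hne
        have hdrop := deg_sub_cdel_lt (Adj := Adj) (v := v) ⟨u, hu.1⟩ (hsym hu.2)
        have hcoe : deg Adj ((⟨u, hu.1⟩ : (cdel v : Set V)) : V) = deg Adj u := rfl
        rw [hcoe] at hdrop
        have hdu : deg Adj u ≤ 2 := hdeg2 u
        have hIH2 := hIH.2 ⟨⟨u, hu.1⟩, by omega⟩
        omega
      by_cases hex : ∃ v, deg Adj v ≤ 1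
      · obtain ⟨v, hv⟩ := hex
        rcases Nat.eq_zero_or_pos (deg Adj v) with hd0 | hd1
        · -- degree 0 vertex : edges don't change when we delete it
          have hsplit := edge_split hsym (cdel v)
          have hcut := cut_cdel_le hsym (hnl v)
          have hcS : Nat.card ((cdel v : Set V) : Type u) = N - 1 := by
            have := card_cdel (V := V) v
            omega
          have hIH := ih (N - 1) (by omega) (rSub (cdel v) Adj) (rSub_symm hsym) hcS
            (fun x => hnl x) (fun x => le_trans (deg_sub_le (cdel v) x) (hdeg2 x))
          have h1 := hIH.1
          constructor
          · omega
          · intro _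
            omega
        · have := key v hd1
          have hdv : deg Adj v = 1 := le_antisymm hv hd1
          constructor
          · omega
          · intro _
            omega
      · push_neg at hex
        have hNon : Nonempty V := by
          by_contra h
          rw [not_nonempty_iff] at h
          rw [Nat.card_of_isEmpty] at hcard
          omega
        obtain ⟨v⟩ := hNon
        have hdv : deg Adj v = 2 := le_antisymm (hdeg2 v) (hex v)
        have := key v (by omega)
        constructor
        · omega
        · intro h
          obtain ⟨w, hw⟩ := h
          exact absurd (hex w) (by omega)

end MLE
section Numeric0
lemma rpow3_mono {a b : ℝ} (h : a ≤ b) : (3:ℝ) ^ a ≤ (3:ℝ) ^ b :=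
  Real.rpow_le_rpow_of_exponent_le (by norm_num) h

lemma rpow3_pos (a : ℝ) : 0 < (3:ℝ) ^ a := Real.rpow_pos_of_pos (by norm_num) a

lemma two_le_rpow23 : (2:ℝ) ≤ (3:ℝ) ^ ((2:ℝ)/3) := by
  have h3 : ((3:ℝ) ^ ((2:ℝ)/3)) ^ (3:ℕ) = 9 := by
    rw [← Real.rpow_natCast ((3:ℝ) ^ ((2:ℝ)/3)) 3, ← Real.rpow_mul (by norm_num)]
    norm_num
  have := (pow_le_pow_iff_left₀ (by norm_num : (0:ℝ) ≤ 2)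
    (le_of_lt (rpow3_pos ((2:ℝ)/3))) (by norm_num : (3:ℕ) ≠ 0))
  rw [h3] at this
  exact this.mp (by norm_num)
end Numeric0

section MM2
universe u

lemma misCount_le_of_maxdeg2 : ∀ (N : ℕ), ∀ {V : Type u} [Finite V] (Adj : V → V → Prop)
    (hsym : Symmetric Adj), Nat.card V = N → (∀ x, ¬ Adj x x) → (∀ x, deg Adj x ≤ 2) →
    (misCount Adj : ℝ) ≤ (3:ℝ) ^ ((N : ℝ)/3) := by
  intro N
  induction N using Nat.strong_induction_on with
  | _ N ih =>
    intro V _ Adj hsym hcard hnl hdeg2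
    rcases Nat.eq_zero_or_pos N with hN | hN
    · subst hN
      have hempty : IsEmpty V := by
        rcases Nat.card_eq_zero.mp hcard with h | h
        · exact h
        · exact absurd ‹Finite V› h.not_finite
      have h1 := misCount_le_one_of_empty Adj
      have : ((misCount Adj : ℝ)) ≤ 1 := by exact_mod_cast h1
      simpa using this
    · by_cases h0 : ∃ v, deg Adj v = 0
      · -- isolated vertex
        obtain ⟨v, hv⟩ := h0
        have h0nbr := no_nbr_of_deg_zero (hnl v) hv
        have hstep := mis_le_of_isolated hsym h0nbr
        have hcS := card_cnbh Adj v
        rw [hv] at hcS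
        have hIH := ih (Nat.card (cnbh Adj v : Set V)) (by omega)
          (rSub (cnbh Adj v) Adj) (rSub_symm hsym) rfl (fun x => hnl x)
          (fun x => le_trans (deg_sub_le _ x) (hdeg2 x))
        calc (misCount Adj : ℝ) ≤ (misCount (rSub (cnbh Adj v) Adj) : ℝ) := by
              exact_mod_cast hstep
          _ ≤ (3:ℝ) ^ ((Nat.card (cnbh Adj v : Set V) : ℝ)/3) := hIH
          _ ≤ (3:ℝ) ^ ((N : ℝ)/3) := by
              apply rpow3_mono
              have : (Nat.card (cnbh Adj v : Set V) : ℝ) ≤ N := by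
                have : Nat.card (cnbh Adj v : Set V) ≤ N := by omega
                exact_mod_cast this
              linarith
      · by_cases h1 : ∃ v, deg Adj v = 1
        · -- degree one vertex v with neighbour u
          obtain ⟨v, hv⟩ := h1
          obtain ⟨u, hu⟩ := Set.ncard_eq_one.mp hv
          have humem : u ∈ nbr Adj v := by rw [hu]; rfl
          have huv : u ≠ v := humem.1
          have hadjvu : Adj v u := humem.2
          have hstep := mis_le_two_branch hsym u
          -- branch 2 : G - N[u]
          have hdegu1 : 1 ≤ deg Adj u := by
            have hvmem : v ∈ nbr Adj u := ⟨fun h => huv h.symm, hsym hadjvu⟩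
            have h' := (Set.ncard_pos (s := nbr Adj u) (Set.toFinite _)).mpr ⟨v, hvmem⟩
            exact h'
          have hcS2 := card_cnbh Adj u
          have hIH2 := ih (Nat.card (cnbh Adj u : Set V)) (by omega)
            (rSub (cnbh Adj u) Adj) (rSub_symm hsym) rfl (fun x => hnl x)
            (fun x => le_trans (deg_sub_le _ x) (hdeg2 x))
          -- branch 1 : G - u , in which v is isolated
          have hvcd : v ∈ (cdel u : Set V) := fun h => huv h.symm
          have h0' : ∀ w : (cdel u : Set V), ¬ rSub (cdel u) Adj ⟨v, hvcd⟩ w := by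
            intro w hadj
            have hadj' : Adj v (w : V) := hadj
            by_cases hwv : (w : V) = v
            · exact hnl v (hwv ▸ hadj')
            · have : (w : V) ∈ nbr Adj v := ⟨hwv, hadj'⟩
              rw [hu] at this
              exact w.2 this
          have hstep2 := mis_le_of_isolated (rSub_symm hsym) h0'
          have hdeg0' : deg (rSub (cdel u) Adj) ⟨v, hvcd⟩ = 0 := deg_zero_of_no_nbr h0'
          have hcS1 := card_cnbh (rSub (cdel u) Adj) ⟨v, hvcd⟩
          rw [hdeg0'] at hcS1
          have hcdel := card_cdel (V := V) u
          have hIH1 := ih (Nat.card (cnbh (rSub (cdel u) Adj) ⟨v, hvcd⟩ :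
              Set (cdel u : Set V))) (by omega)
            (rSub (cnbh (rSub (cdel u) Adj) ⟨v, hvcd⟩) (rSub (cdel u) Adj))
            (rSub_symm (rSub_symm hsym)) rfl (fun x => hnl x)
            (fun x => le_trans (deg_sub_le _ x) (le_trans (deg_sub_le _ _) (hdeg2 x)))
          -- put everything together
          have hb1 : (misCount (rSub (cdel u) Adj) : ℝ) ≤ (3:ℝ) ^ (((N:ℝ) - 2)/3) := by
            calc (misCount (rSub (cdel u) Adj) : ℝ)
                ≤ (misCount (rSub (cnbh (rSub (cdel u) Adj) ⟨v, hvcd⟩)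
                    (rSub (cdel u) Adj)) : ℝ) := by exact_mod_cast hstep2
              _ ≤ _ := hIH1
              _ ≤ (3:ℝ) ^ (((N:ℝ) - 2)/3) := by
                  apply rpow3_mono
                  have hle : (Nat.card (cnbh (rSub (cdel u) Adj) ⟨v, hvcd⟩ :
                      Set (cdel u : Set V)) : ℝ) ≤ (N:ℝ) - 2 := by
                    have h' : Nat.card (cnbh (rSub (cdel u) Adj) ⟨v, hvcd⟩ :
                        Set (cdel u : Set V)) + 2 ≤ N := by omega
                    have := (Nat.cast_le (α := ℝ)).mpr h'
                    push_cast at this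
                    linarith
                  linarith
          have hb2 : (misCount (rSub (cnbh Adj u) Adj) : ℝ) ≤ (3:ℝ) ^ (((N:ℝ) - 2)/3) := by
            calc (misCount (rSub (cnbh Adj u) Adj) : ℝ)
                ≤ (3:ℝ) ^ ((Nat.card (cnbh Adj u : Set V) : ℝ)/3) := hIH2
              _ ≤ (3:ℝ) ^ (((N:ℝ) - 2)/3) := by
                  apply rpow3_mono
                  have h' : Nat.card (cnbh Adj u : Set V) + 2 ≤ N := by omega
                  have := (Nat.cast_le (α := ℝ)).mpr h'
                  push_cast at this
                  linarith
          have hsum : (misCount Adj : ℝ) ≤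
              (misCount (rSub (cdel u) Adj) : ℝ) + (misCount (rSub (cnbh Adj u) Adj) : ℝ) := by
            exact_mod_cast hstep
          have hfin : (2:ℝ) * (3:ℝ) ^ (((N:ℝ) - 2)/3) ≤ (3:ℝ) ^ ((N:ℝ)/3) := by
            have heq : (N:ℝ)/3 = ((N:ℝ) - 2)/3 + (2:ℝ)/3 := by ring
            rw [heq, Real.rpow_add (by norm_num)]
            have := mul_le_mul_of_nonneg_left two_le_rpow23
              (le_of_lt (rpow3_pos (((N:ℝ) - 2)/3)))
            linarith [this]
          linarith
        · -- all degrees are 2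
          push_neg at h0 h1
          have hall : ∀ v : V, deg Adj v = 2 := by
            intro v
            have := hdeg2 v
            have := h0 v
            have := h1 v
            omega
          have hNon : Nonempty V := by
            by_contra h
            rw [not_nonempty_iff] at h
            rw [Nat.card_of_isEmpty] at hcard
            omega
          obtain ⟨v⟩ := hNon
          obtain ⟨a, b, hab, habs⟩ := Set.ncard_eq_two.mp (hall v)
          have hamem : a ∈ nbr Adj v := by rw [habs]; exact Set.mem_insert a {b}
          have hbmem : b ∈ nbr Adj v := by rw [habs]; exact Set.mem_insert_of_mem a rfl
          have hcov : ∀ y, Adj v y → y = a ∨ y = b := by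
            intro y hy
            by_cases hyv : y = v
            · exact absurd (hyv ▸ hy) (hnl v)
            · have : y ∈ nbr Adj v := ⟨hyv, hy⟩
              rw [habs] at this
              exact this
          have hstep := mis_le_three_branch hsym (hnl v) hcov
          have hbound : ∀ x : V, (misCount (rSub (cnbh Adj x) Adj) : ℝ) ≤
              (3:ℝ) ^ (((N:ℝ) - 3)/3) := by
            intro x
            have hcS := card_cnbh Adj x
            rw [hall x] at hcS
            have hIHx := ih (Nat.card (cnbh Adj x : Set V)) (by omega)
              (rSub (cnbh Adj x) Adj) (rSub_symm hsym) rfl (fun y => hnl y)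
              (fun y => le_trans (deg_sub_le _ y) (hdeg2 y))
            refine le_trans hIHx (rpow3_mono ?_)
            have h' : Nat.card (cnbh Adj x : Set V) + 3 = N := by omega
            have := congrArg (fun t : ℕ => (t : ℝ)) h'
            push_cast at this
            linarith
          have hsum : (misCount Adj : ℝ) ≤
              (misCount (rSub (cnbh Adj v) Adj) : ℝ) + (misCount (rSub (cnbh Adj a) Adj) : ℝ)
              + (misCount (rSub (cnbh Adj b) Adj) : ℝ) := by
            exact_mod_cast hstep
          have hfin : (3:ℝ) * (3:ℝ) ^ (((N:ℝ) - 3)/3) = (3:ℝ) ^ ((N:ℝ)/3) := by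
            have heq : (N:ℝ)/3 = ((N:ℝ) - 3)/3 + 1 := by ring
            rw [heq, Real.rpow_add_one (by norm_num)]
            ring
          have h1 := hbound v
          have h2 := hbound a
          have h3 := hbound b
          linarith

end MM2
section Numeric1

lemma rpow3_le_of_pow {p q : ℕ} {a : ℝ} (hq : q ≠ 0) (ha : 0 < a)
    (h : ((3:ℝ)^p)⁻¹ ≤ a ^ q) : (3:ℝ) ^ (-(p:ℝ)/(q:ℝ)) ≤ a := by
  have hx := rpow3_pos (-(p:ℝ)/(q:ℝ))
  rw [← pow_le_pow_iff_left₀ (le_of_lt hx) (le_of_lt ha) hq]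
  have hxq : ((3:ℝ) ^ (-(p:ℝ)/(q:ℝ))) ^ q = ((3:ℝ)^p)⁻¹ := by
    rw [← Real.rpow_natCast ((3:ℝ) ^ (-(p:ℝ)/(q:ℝ))) q, ← Real.rpow_mul (by norm_num)]
    have hq' : (q:ℝ) ≠ 0 := Nat.cast_ne_zero.mpr hq
    have : (-(p:ℝ)/(q:ℝ)) * q = -(p:ℝ) := by field_simp
    rw [this, Real.rpow_neg (by norm_num), Real.rpow_natCast]
  rw [hxq]
  exact h

lemma num_e1 : (3:ℝ) ^ (-(11:ℝ)/39) ≤ 7337/10000 := by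
  have := rpow3_le_of_pow (p := 11) (q := 39) (a := 7337/10000)
    (by norm_num) (by norm_num) (by norm_num)
  norm_num at this ⊢
  convert this using 3 <;> norm_num

lemma num_e2 : (3:ℝ) ^ (-(47:ℝ)/39) ≤ 2662/10000 := by
  have := rpow3_le_of_pow (p := 47) (q := 39) (a := 2662/10000)
    (by norm_num) (by norm_num) (by norm_num)
  norm_num at this ⊢
  convert this using 3 <;> norm_num

lemma num_e3 : (3:ℝ) ^ (-(10:ℝ)/39) ≤ 755/1000 := by
  have := rpow3_le_of_pow (p := 10) (q := 39) (a := 755/1000)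
    (by norm_num) (by norm_num) (by norm_num)
  norm_num at this ⊢
  convert this using 3 <;> norm_num

lemma num_e4 : (3:ℝ) ^ (-(56:ℝ)/39) ≤ 21/100 := by
  have := rpow3_le_of_pow (p := 56) (q := 39) (a := 21/100)
    (by norm_num) (by norm_num) (by norm_num)
  norm_num at this ⊢
  convert this using 3 <;> norm_num

lemma num1 : (3:ℝ) ^ (-(11:ℝ)/39) + (3:ℝ) ^ (-(47:ℝ)/39) ≤ 1 := by
  have := num_e1; have := num_e2; linarith

lemma num2 : (3:ℝ) ^ (-(10:ℝ)/39) + (3:ℝ) ^ (-(56:ℝ)/39) ≤ 1 := by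
  have := num_e3; have := num_e4; linarith

lemma phi_le_aux {n' m' n m d e Δ : ℝ} (hΔ : 0 < Δ) (hn : n' = n - d) (hm : m - e ≤ m') :
    n'/3 - (m' - n')/(13*Δ) ≤ (n/3 - (m - n)/(13*Δ)) + (-(d/3) + (e - d)/(13*Δ)) := by
  have h13 : (0:ℝ) < 13*Δ := by linarith
  rw [← sub_nonneg]
  have key : ((n/3 - (m - n)/(13*Δ)) + (-(d/3) + (e - d)/(13*Δ))) - (n'/3 - (m' - n')/(13*Δ))
      = (m' - (m - e))/(13*Δ) := by
    rw [hn]; field_simp; ring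
  rw [key]
  apply div_nonneg _ (le_of_lt h13)
  linarith

lemma branch_sum_le {M m1 m2 : ℕ} {φ φ1 φ2 c1 c2 : ℝ} (h : M ≤ m1 + m2)
    (h1 : (m1:ℝ) ≤ (3:ℝ)^φ1) (h2 : (m2:ℝ) ≤ (3:ℝ)^φ2)
    (e1 : φ1 ≤ φ + c1) (e2 : φ2 ≤ φ + c2)
    (hnum : (3:ℝ)^c1 + (3:ℝ)^c2 ≤ 1) : (M:ℝ) ≤ (3:ℝ)^φ := by
  have hM : (M:ℝ) ≤ (m1:ℝ) + (m2:ℝ) := by exact_mod_cast h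
  have k1 : (3:ℝ)^φ1 ≤ (3:ℝ)^φ * (3:ℝ)^c1 := by
    rw [← Real.rpow_add (by norm_num)]; exact rpow3_mono e1
  have k2 : (3:ℝ)^φ2 ≤ (3:ℝ)^φ * (3:ℝ)^c2 := by
    rw [← Real.rpow_add (by norm_num)]; exact rpow3_mono e2
  have hφ := rpow3_pos φ
  nlinarith [rpow3_pos c1, rpow3_pos c2]

end Numeric1
section NumericD

lemma numD3 {Δ : ℝ} (h13 : (0:ℝ) < 13*Δ) (hΔ3 : (3:ℝ) ≤ Δ) :
    (3:ℝ) ^ (-((1:ℝ)/3) + ((3:ℝ) - 1)/(13*Δ))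
      + (3:ℝ) ^ (-(((3:ℝ)+1)/3) + ((3:ℝ)*(3:ℝ) - ((3:ℝ)+1))/(13*Δ)) ≤ 1 := by
  have e1 : -((1:ℝ)/3) + ((3:ℝ) - 1)/(13*Δ) ≤ -(11:ℝ)/39 := by
    have : ((3:ℝ) - 1)/(13*Δ) ≤ 2/39 := by
      rw [div_le_div_iff₀ h13 (by norm_num)]
      linarith
    linarith
  have e2 : -(((3:ℝ)+1)/3) + ((3:ℝ)*(3:ℝ) - ((3:ℝ)+1))/(13*Δ) ≤ -(47:ℝ)/39 := by
    have : ((3:ℝ)*(3:ℝ) - ((3:ℝ)+1))/(13*Δ) ≤ 5/39 := by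
      rw [div_le_div_iff₀ h13 (by norm_num)]
      linarith
    linarith
  calc _ ≤ (3:ℝ) ^ (-(11:ℝ)/39) + (3:ℝ) ^ (-(47:ℝ)/39) :=
        add_le_add (rpow3_mono e1) (rpow3_mono e2)
    _ ≤ 1 := num1

lemma numD4 {D Δ : ℝ} (h13 : (0:ℝ) < 13*Δ) (hD4 : (4:ℝ) ≤ D) (hDΔ : D ≤ Δ) :
    (3:ℝ) ^ (-((1:ℝ)/3) + (D - 1)/(13*Δ))
      + (3:ℝ) ^ (-((D+1)/3) + (D*D - (D+1))/(13*Δ)) ≤ 1 := by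
  have e1 : -((1:ℝ)/3) + (D - 1)/(13*Δ) ≤ -(10:ℝ)/39 := by
    have : (D - 1)/(13*Δ) ≤ 1/13 := by
      rw [div_le_div_iff₀ h13 (by norm_num)]
      linarith
    linarith
  have e2 : -((D+1)/3) + (D*D - (D+1))/(13*Δ) ≤ -(56:ℝ)/39 := by
    have hstep1 : (D*D - (D+1))/(13*Δ) ≤ (D-1)/13 := by
      rw [div_le_div_iff₀ h13 (by norm_num)]
      nlinarith
    linarith
  calc _ ≤ (3:ℝ) ^ (-(10:ℝ)/39) + (3:ℝ) ^ (-(56:ℝ)/39) :=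
        add_le_add (rpow3_mono e1) (rpow3_mono e2)
    _ ≤ 1 := num2

lemma loop_exp_le {dv Δ : ℝ} (h13 : (0:ℝ) < 13*Δ) (hd : dv + 2 ≤ Δ) (hd0 : 0 ≤ dv) :
    -((1:ℝ)/3) + ((dv + 1) - 1)/(13*Δ) ≤ 0 := by
  have hdd : dv/(13*Δ) ≤ 1/13 := by
    rw [div_le_div_iff₀ h13 (by norm_num)]
    linarith
  have hsimp : ((dv + 1) - 1)/(13*Δ) = dv/(13*Δ) := by ring_nf
  rw [hsimp]
  linarith

end NumericD

section MainInduction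
universe u

lemma main_bound (Δ : ℕ) (hΔ1 : 1 ≤ Δ) : ∀ (N : ℕ), ∀ {V : Type u} [Finite V]
    (Adj : V → V → Prop) (hsym : Symmetric Adj), Nat.card V = N →
    (∀ v, deg Adj v + (if Adj v v then 2 else 0) ≤ Δ) →
    (misCount Adj : ℝ) ≤
      (3:ℝ) ^ ((N : ℝ)/3 - (((Sym2.fromRel (symmOf hsym)).ncard : ℝ) - (N : ℝ))/(13*(Δ:ℝ))) := by
  have hΔR : (0:ℝ) < (Δ:ℝ) := by exact_mod_cast hΔ1
  have h13 : (0:ℝ) < 13*(Δ:ℝ) := by linarith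
  intro N
  induction N using Nat.strong_induction_on with
  | _ N ih =>
    intro V _ Adj hsym hcard hdeg
    rcases Nat.eq_zero_or_pos N with hN | hN
    · subst hN
      have hempty : IsEmpty V := by
        rcases Nat.card_eq_zero.mp hcard with h | h
        · exact h
        · exact absurd ‹Finite V› h.not_finite
      have h1 : (misCount Adj : ℝ) ≤ 1 := by exact_mod_cast misCount_le_one_of_empty Adj
      rw [edges_empty hsym]
      simpa using h1
    · by_cases hloop : ∃ v, Adj v v
      · -- delete a looped vertex
        obtain ⟨v, hv⟩ := hloop
        have hstep := mis_le_of_loop (Adj := Adj) hv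
        have hsplit := edge_split hsym (cdel v)
        have hcut := cut_cdel_le_loop hsym v
        have hcd := card_cdel (V := V) v
        have hdegv : deg Adj v + 2 ≤ Δ := by
          have := hdeg v
          rw [if_pos hv] at this
          omega
        have hIH := ih (Nat.card ((cdel v : Set V))) (by omega)
          (rSub (cdel v) Adj) (rSub_symm hsym) rfl
          (fun x => le_trans (by
            have h1 := deg_sub_le (Adj := Adj) (cdel v) x
            by_cases hx : Adj (x : V) (x : V)
            · rw [if_pos hx, if_pos (show rSub (cdel v) Adj x x from hx)] at *
              omega
            · rw [if_neg hx, if_neg (show ¬ rSub (cdel v) Adj x x from hx)] at *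
              omega) (hdeg x))
        have hnR : ((Nat.card ((cdel v : Set V)) : ℕ) : ℝ) = (N:ℝ) - 1 := by
          have h' : Nat.card ((cdel v : Set V)) + 1 = N := by omega
          push_cast [← h']; ring
        have hmR : ((Sym2.fromRel (symmOf hsym)).ncard : ℝ) - ((deg Adj v : ℝ) + 1)
            ≤ ((Sym2.fromRel (symmOf (rSub_symm (S := cdel v) hsym))).ncard : ℝ) := by
          have h2 := (Nat.cast_le (α := ℝ)).mpr hcut
          have h1 : ((Sym2.fromRel (symmOf hsym)).ncard : ℝ)
              = ((Sym2.fromRel (symmOf (rSub_symm (S := cdel v) hsym))).ncard : ℝ) +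
              ({e | e ∈ Sym2.fromRel (symmOf hsym) ∧ ∃ x ∈ e, x ∉ (cdel v : Set V)}.ncard : ℝ) := by
            exact_mod_cast hsplit
          push_cast at h2
          linarith
        have hexp := phi_le_aux (n := (N:ℝ)) (m := ((Sym2.fromRel (symmOf hsym)).ncard : ℝ))
          (d := 1) (e := (deg Adj v : ℝ) + 1) hΔR hnR hmR
        have hcle := loop_exp_le (dv := (deg Adj v : ℝ)) h13
          (by exact_mod_cast hdegv) (by positivity)
        calc (misCount Adj : ℝ) ≤ (misCount (rSub (cdel v) Adj) : ℝ) := by exact_mod_cast hstep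
          _ ≤ _ := hIH
          _ ≤ (3:ℝ) ^ ((N : ℝ)/3 - (((Sym2.fromRel (symmOf hsym)).ncard : ℝ) - (N : ℝ))/(13*(Δ:ℝ))) := by
              apply rpow3_mono
              linarith [hexp, hcle]
      · push_neg at hloop
        by_cases hD2 : ∀ w, deg Adj w ≤ 2
        · -- max degree at most two : Moon-Moser plus the edge bound
          have hmm := misCount_le_of_maxdeg2 N Adj hsym hcard hloop hD2
          have hedge := (edges_le_of_maxdeg2 N Adj hsym hcard hloop hD2).1
          refine le_trans hmm (rpow3_mono ?_)
          have : ((Sym2.fromRel (symmOf hsym)).ncard : ℝ) ≤ (N:ℝ) := by exact_mod_cast hedge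
          have hpos : ((N:ℝ) - ((Sym2.fromRel (symmOf hsym)).ncard : ℝ))/(13*(Δ:ℝ)) ≥ 0 :=
            div_nonneg (by linarith) (le_of_lt h13)
          have heq : (N : ℝ)/3 - (((Sym2.fromRel (symmOf hsym)).ncard : ℝ) - (N : ℝ))/(13*(Δ:ℝ))
              = (N:ℝ)/3 + ((N:ℝ) - ((Sym2.fromRel (symmOf hsym)).ncard : ℝ))/(13*(Δ:ℝ)) := by
            ring
          rw [heq]
          linarith
        · -- there is a vertex of degree at least three
          push_neg at hD2
          obtain ⟨v₀, hv₀⟩ := hD2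
          have _ : Fintype V := Fintype.ofFinite V
          have hDle : ∀ w, deg Adj w ≤ Finset.univ.sup (deg Adj) :=
            fun w => Finset.le_sup (Finset.mem_univ w)
          obtain ⟨v, -, hveq⟩ := Finset.exists_mem_eq_sup Finset.univ
            ⟨v₀, Finset.mem_univ v₀⟩ (deg Adj)
          set D : ℕ := Finset.univ.sup (deg Adj) with hD
          have hdv : deg Adj v = D := hveq.symm
          have hD3 : 3 ≤ D := le_trans hv₀ (hDle v₀)
          have hDΔ : D ≤ Δ := by
            have := hdeg v
            rw [if_neg (hloop v)] at this
            omega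
          have hstep := mis_le_two_branch hsym v
          -- edge splits and cuts
          have hsplit1 := edge_split hsym (cdel v)
          have hcut1 : {e | e ∈ Sym2.fromRel (symmOf hsym) ∧ ∃ x ∈ e, x ∉ (cdel v : Set V)}.ncard
              ≤ D := le_trans (cut_cdel_le hsym (hloop v)) (by omega)
          have hsplit2 := edge_split hsym (cnbh Adj v)
          have hcut2 : {e | e ∈ Sym2.fromRel (symmOf hsym) ∧ ∃ x ∈ e, x ∉ (cnbh Adj v : Set V)}.ncard
              ≤ D * D := by
            have h' := cut_cnbh_le hsym hloop v D (by omega) (fun w _ => hDle w)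
            calc _ ≤ deg Adj v * D := h'
              _ ≤ D * D := by rw [hdv]
          have hcd := card_cdel (V := V) v
          have hcn := card_cnbh Adj v
          rw [hdv] at hcn
          -- IH hypotheses transfer
          have hdegsub : ∀ (S : Set V) (x : S),
              deg (rSub S Adj) x + (if rSub S Adj x x then 2 else 0) ≤ Δ := by
            intro S x
            have h1 := deg_sub_le (Adj := Adj) S x
            have h2 := hdeg (x : V)
            by_cases hx : Adj (x : V) (x : V)
            · rw [if_pos hx] at h2
              rw [if_pos (show rSub S Adj x x from hx)]
              omega
            · rw [if_neg hx] at h2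
              rw [if_neg (show ¬ rSub S Adj x x from hx)]
              omega
          have hIH1 := ih (Nat.card ((cdel v : Set V))) (by omega)
            (rSub (cdel v) Adj) (rSub_symm hsym) rfl (hdegsub (cdel v))
          have hIH2 := ih (Nat.card ((cnbh Adj v : Set V))) (by omega)
            (rSub (cnbh Adj v) Adj) (rSub_symm hsym) rfl (hdegsub (cnbh Adj v))
          have hn1R : ((Nat.card ((cdel v : Set V)) : ℕ) : ℝ) = (N:ℝ) - 1 := by
            have h' : Nat.card ((cdel v : Set V)) + 1 = N := by omega
            push_cast [← h']; ring
          have hn2R : ((Nat.card ((cnbh Adj v : Set V)) : ℕ) : ℝ) = (N:ℝ) - ((D:ℝ) + 1) := by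
            have h' : Nat.card ((cnbh Adj v : Set V)) + (D + 1) = N := by omega
            push_cast [← h']; ring
          have hm1R : ((Sym2.fromRel (symmOf hsym)).ncard : ℝ) - (D:ℝ)
              ≤ ((Sym2.fromRel (symmOf (rSub_symm (S := cdel v) hsym))).ncard : ℝ) := by
            have h2 := (Nat.cast_le (α := ℝ)).mpr hcut1
            have h1 : ((Sym2.fromRel (symmOf hsym)).ncard : ℝ)
                = ((Sym2.fromRel (symmOf (rSub_symm (S := cdel v) hsym))).ncard : ℝ) +
                ({e | e ∈ Sym2.fromRel (symmOf hsym) ∧ ∃ x ∈ e, x ∉ (cdel v : Set V)}.ncard : ℝ) := by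
              exact_mod_cast hsplit1
            push_cast at h2
            linarith
          have hm2R : ((Sym2.fromRel (symmOf hsym)).ncard : ℝ) - (D:ℝ)*(D:ℝ)
              ≤ ((Sym2.fromRel (symmOf (rSub_symm (S := cnbh Adj v) hsym))).ncard : ℝ) := by
            have h2 := (Nat.cast_le (α := ℝ)).mpr hcut2
            have h1 : ((Sym2.fromRel (symmOf hsym)).ncard : ℝ)
                = ((Sym2.fromRel (symmOf (rSub_symm (S := cnbh Adj v) hsym))).ncard : ℝ) +
                ({e | e ∈ Sym2.fromRel (symmOf hsym) ∧ ∃ x ∈ e, x ∉ (cnbh Adj v : Set V)}.ncard : ℝ) := by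
              exact_mod_cast hsplit2
            push_cast at h2
            linarith
          have hexp1 := phi_le_aux (n := (N:ℝ)) (m := ((Sym2.fromRel (symmOf hsym)).ncard : ℝ))
            (d := 1) (e := (D:ℝ)) hΔR hn1R hm1R
          have hexp2 := phi_le_aux (n := (N:ℝ)) (m := ((Sym2.fromRel (symmOf hsym)).ncard : ℝ))
            (d := (D:ℝ)+1) (e := (D:ℝ)*(D:ℝ)) hΔR hn2R hm2R
          -- numeric part
          have hDΔR : (D:ℝ) ≤ (Δ:ℝ) := by exact_mod_cast hDΔ
          have hnum : (3:ℝ) ^ (-((1:ℝ)/3) + ((D:ℝ) - 1)/(13*(Δ:ℝ)))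
              + (3:ℝ) ^ (-(((D:ℝ)+1)/3) + ((D:ℝ)*(D:ℝ) - ((D:ℝ)+1))/(13*(Δ:ℝ))) ≤ 1 := by
            rcases eq_or_lt_of_le hD3 with hD3' | hD4
            · have hDval : (D:ℝ) = 3 := by exact_mod_cast hD3'.symm
              rw [hDval]
              exact numD3 h13 (le_trans (le_of_eq hDval.symm) hDΔR)
            · have hD4' : (4:ℝ) ≤ (D:ℝ) := by exact_mod_cast hD4
              exact numD4 h13 hD4' hDΔR
          exact branch_sum_le hstep hIH1 hIH2 hexp1 hexp2 hnum

end MainInduction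


open Classical in
/-- Stability version of the Moon–Moser bound: an `n`-vertex graph (loops allowed)
with `n + k` edges and maximum degree at most `Δ` has at most
`C * 3 ^ (n/3 - k/(13Δ))` maximal independent sets, whenever `C ≥ 3 ^ (Δ/13)`. -/
theorem mis_of_dense_bounded_degree_graph
    (Δ : ℕ) (hΔ : 1 ≤ Δ) (k : ℤ) (C : ℝ) (hC : C ≥ 3 ^ ((Δ : ℝ) / 13))
    (V : Type) [Fintype V] (Adj : V → V → Prop) (hsym : Symmetric Adj)
    (n : ℕ) (hn : n = Fintype.card V)
    (hedges : ((Sym2.fromRel (⟨fun a b h => hsym h⟩ : Std.Symm Adj)).ncard : ℤ) = (n : ℤ) + k)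
    (hdeg : ∀ v : V,
      {u : V | u ≠ v ∧ Adj v u}.ncard + (if Adj v v then 2 else 0) ≤ Δ) :
    (graphMIS Adj : ℝ) ≤ C * 3 ^ ((n : ℝ) / 3 - (k : ℝ) / (13 * Δ)) := by
  have hcard : Nat.card V = n := by rw [Nat.card_eq_fintype_card, hn]
  have hmain := main_bound Δ hΔ n Adj hsym hcard (fun v => hdeg v)
  have hmeq : ((Sym2.fromRel (symmOf hsym)).ncard : ℝ) = (n : ℝ) + (k : ℝ) := by
    exact_mod_cast hedges
  have hexp : (n : ℝ)/3 - (((Sym2.fromRel (symmOf hsym)).ncard : ℝ) - (n : ℝ))/(13*(Δ:ℝ))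
      = (n : ℝ) / 3 - (k : ℝ) / (13 * Δ) := by
    rw [hmeq]; ring_nf
  rw [hexp] at hmain
  have hC1 : (1:ℝ) ≤ C := by
    have h0 : (1:ℝ) = (3:ℝ) ^ (0:ℝ) := (Real.rpow_zero 3).symm
    have := rpow3_mono (show (0:ℝ) ≤ (Δ:ℝ)/13 by positivity)
    rw [← h0] at this
    linarith
  have hmis : (graphMIS Adj : ℝ) = (misCount Adj : ℝ) := rfl
  rw [hmis]
  calc (misCount Adj : ℝ) ≤ (3:ℝ) ^ ((n : ℝ) / 3 - (k : ℝ) / (13 * Δ)) := hmain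
    _ ≤ C * 3 ^ ((n : ℝ) / 3 - (k : ℝ) / (13 * Δ)) := by
        nlinarith [rpow3_pos ((n : ℝ) / 3 - (k : ℝ) / (13 * Δ))]
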